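/- Let P_4 be the path with vertices {0,1,2,3,4} and edges i–(i+1), let P_12 be the path with 13 vertices a,b,c,d,e,f,g,h,i,j,k,l,m (consecutive vertices adjacent), and let ψ : P_12 → P_4 be the graph homomorphism with values, in order along P_12: 0,1,2,1,2,3,4,3,2,3,2,1,0. Then for every digraph D without isolated points, every graph homomorphism χ : P_12 → D ⋆ (P_12, a, m) satisfying ψ_D ∘ χ = ψ is equal to φ_{(u,v)} for some edge (u,v) ∈ E(D). -/

import Mathlib

open SimpleGraph

attribute [local instance] Classical.propDecidable

/-- The vertex set of the arrow construction `D ⋆ H`: the disjoint union of `D` and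
`E(D) × (V(H) ∖ {a, b})`, where `E(D)` is the set of edges of the digraph `(D, E)` and
`a`, `b` are the two distinguished vertices of `H`. -/
def starVert (V : Type*) (a b : V) (D : Type*) (E : D → D → Prop) : Type _ :=
  D ⊕ ({p : D × D // E p.1 p.2} × {x : V // x ≠ a ∧ x ≠ b})

/-- For an edge `(u, v)` of the digraph `(D, E)`, the map
`φ_{(u,v)} : V(H) → V(D ⋆ H)` sending `a ↦ u`, `b ↦ v`, and `x ↦ (u, v, x)` otherwise. -/
noncomputable def starPhi {V : Type*} (a b : V) {D : Type*} {E : D → D → Prop}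
    (u v : D) (huv : E u v) (x : V) : starVert V a b D E :=
  if hx : x = a then Sum.inl u
  else if hx' : x = b then Sum.inl v
  else Sum.inr (⟨(u, v), huv⟩, ⟨x, hx, hx'⟩)

/-- The arrow construction `D ⋆ H` for a simple graph `H` with distinguished vertices
`a`, `b` and a digraph `(D, E)`: the edges are exactly the pairs
`(φ_{(u,v)} s, φ_{(u,v)} t)` for `(u, v) ∈ E(D)` and `(s, t) ∈ E(H)`. -/
noncomputable def starGraph {V : Type*} (H : SimpleGraph V) (a b : V)
    (D : Type*) (E : D → D → Prop) : SimpleGraph (starVert V a b D E) :=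
  SimpleGraph.fromRel (fun x y => ∃ (u v : D) (huv : E u v) (s t : V),
    H.Adj s t ∧ starPhi a b u v huv s = x ∧ starPhi a b u v huv t = y)

/-- Given a vertex map `f : V(H) → V(G)` (intended to satisfy `f a = f b`), the map
`f_D : V(D ⋆ H) → V(G)` sending every vertex of `D` to `f a` and `(u, v, y) ↦ f y`. -/
def starMap {V W : Type*} (f : V → W) (a b : V) {D : Type*} {E : D → D → Prop} :
    starVert V a b D E → W :=
  Sum.elim (fun _ => f a) (fun p => f p.2.val)

/-- Given a digraph homomorphism `h : (D₁, E₁) → (D₂, E₂)`, the map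
`h ⋆ H : V(D₁ ⋆ H) → V(D₂ ⋆ H)` sending `x ↦ h x` for `x ∈ D₁` and
`(u, v, w) ↦ (h u, h v, w)`. -/
def starMapHom {V : Type*} (a b : V) {D₁ D₂ : Type*}
    {E₁ : D₁ → D₁ → Prop} {E₂ : D₂ → D₂ → Prop}
    (h : D₁ → D₂) (hh : ∀ u v, E₁ u v → E₂ (h u) (h v)) :
    starVert V a b D₁ E₁ → starVert V a b D₂ E₂ :=
  Sum.elim (fun x => Sum.inl (h x))
    (fun p => Sum.inr (⟨(h p.1.val.1, h p.1.val.2), hh _ _ p.1.prop⟩, p.2))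

/-- Fibers of the coloring `![0,1,2,1,2,3,4,3,2,3,2,1,0]`, in `val` form. -/
lemma memv13 : ∀ y : Fin 13,
    ((![0, 1, 2, 1, 2, 3, 4, 3, 2, 3, 2, 1, 0] : Fin 13 → Fin 5) y = 0 →
      y.val = 0 ∨ y.val = 12) ∧
    ((![0, 1, 2, 1, 2, 3, 4, 3, 2, 3, 2, 1, 0] : Fin 13 → Fin 5) y = 1 →
      y.val = 1 ∨ y.val = 3 ∨ y.val = 11) ∧
    ((![0, 1, 2, 1, 2, 3, 4, 3, 2, 3, 2, 1, 0] : Fin 13 → Fin 5) y = 2 →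
      y.val = 2 ∨ y.val = 4 ∨ y.val = 8 ∨ y.val = 10) ∧
    ((![0, 1, 2, 1, 2, 3, 4, 3, 2, 3, 2, 1, 0] : Fin 13 → Fin 5) y = 3 →
      y.val = 5 ∨ y.val = 7 ∨ y.val = 9) ∧
    ((![0, 1, 2, 1, 2, 3, 4, 3, 2, 3, 2, 1, 0] : Fin 13 → Fin 5) y = 4 →
      y.val = 6) := by decide

/-- The combinatorial core: a walk in `P₁₂` avoiding the endpoints, whose colors follow
`ψ` along positions `1,…,11`, and whose first and last vertices lie in `{1, 11}`,
must be the identity walk. -/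
lemma chain12 (n1 n2 n3 n4 n5 n6 n7 n8 n9 n10 n11 : ℕ)
    (m1 : n1 = 1 ∨ n1 = 3 ∨ n1 = 11) (m2 : n2 = 2 ∨ n2 = 4 ∨ n2 = 8 ∨ n2 = 10)
    (m3 : n3 = 1 ∨ n3 = 3 ∨ n3 = 11) (m4 : n4 = 2 ∨ n4 = 4 ∨ n4 = 8 ∨ n4 = 10)
    (m5 : n5 = 5 ∨ n5 = 7 ∨ n5 = 9) (m6 : n6 = 6)
    (m7 : n7 = 5 ∨ n7 = 7 ∨ n7 = 9) (m8 : n8 = 2 ∨ n8 = 4 ∨ n8 = 8 ∨ n8 = 10)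
    (m9 : n9 = 5 ∨ n9 = 7 ∨ n9 = 9) (m10 : n10 = 2 ∨ n10 = 4 ∨ n10 = 8 ∨ n10 = 10)
    (m11 : n11 = 1 ∨ n11 = 3 ∨ n11 = 11)
    (a1 : n1 + 1 = n2 ∨ n2 + 1 = n1) (a2 : n2 + 1 = n3 ∨ n3 + 1 = n2)
    (a3 : n3 + 1 = n4 ∨ n4 + 1 = n3) (a4 : n4 + 1 = n5 ∨ n5 + 1 = n4)
    (a5 : n5 + 1 = n6 ∨ n6 + 1 = n5) (a6 : n6 + 1 = n7 ∨ n7 + 1 = n6)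
    (a7 : n7 + 1 = n8 ∨ n8 + 1 = n7) (a8 : n8 + 1 = n9 ∨ n9 + 1 = n8)
    (a9 : n9 + 1 = n10 ∨ n10 + 1 = n9) (a10 : n10 + 1 = n11 ∨ n11 + 1 = n10)
    (e0 : n1 = 1 ∨ n1 = 11) (e1 : n11 = 1 ∨ n11 = 11) :
    n1 = 1 ∧ n2 = 2 ∧ n3 = 3 ∧ n4 = 4 ∧ n5 = 5 ∧ n6 = 6 ∧ n7 = 7 ∧ n8 = 8 ∧
      n9 = 9 ∧ n10 = 10 ∧ n11 = 11 := by omega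

/-- If `φ_{(u,v)} x` is an interior vertex `(e, y)`, then `e = (u, v)` and `x = y`. -/
lemma starPhi_inr {V : Type*} {a b : V} {D : Type*} {E : D → D → Prop}
    {u v : D} {huv : E u v} {x : V} {e : {p : D × D // E p.1 p.2}}
    {y : {z : V // z ≠ a ∧ z ≠ b}}
    (h : starPhi a b u v huv x = Sum.inr (e, y)) : e.1 = (u, v) ∧ x = y.1 := by
  unfold starPhi starVert at h
  split_ifs at h with h1 h2
  rw [Sum.inr.injEq, Prod.mk.injEq] at h
  obtain ⟨he, hy⟩ := h
  subst he; subst hy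
  exact ⟨rfl, rfl⟩

/-- If `φ_{(u,v)} x` is a vertex `d` of `D`, then `x = a, d = u` or `x = b, d = v`. -/
lemma starPhi_inl {V : Type*} {a b : V} {D : Type*} {E : D → D → Prop}
    {u v : D} {huv : E u v} {x : V} {d : D}
    (h : starPhi a b u v huv x = Sum.inl d) : (x = a ∧ d = u) ∨ (x = b ∧ d = v) := by
  unfold starPhi starVert at h
  split_ifs at h with h1 h2
  · exact Or.inl ⟨h1, (Sum.inl.inj h).symm⟩
  · exact Or.inr ⟨h2, (Sum.inl.inj h).symm⟩

/-- Two adjacent interior vertices of `D ⋆ H` lie over the same edge of `D`, and their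
`H`-coordinates are adjacent in `H`. -/
lemma star_adj_inr_inr {V : Type*} {H : SimpleGraph V} {a b : V} {D : Type*}
    {E : D → D → Prop} {e e' : {p : D × D // E p.1 p.2}}
    {y y' : {z : V // z ≠ a ∧ z ≠ b}}
    (h : (starGraph H a b D E).Adj (Sum.inr (e, y)) (Sum.inr (e', y'))) :
    e.1 = e'.1 ∧ H.Adj y.1 y'.1 := by
  simp only [_root_.starGraph, fromRel_adj] at h
  obtain ⟨-, h | h⟩ := h
  · obtain ⟨u, v, huv, s, t, hst, hs, ht⟩ := h
    obtain ⟨he, hy⟩ := starPhi_inr hs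
    obtain ⟨he', hy'⟩ := starPhi_inr ht
    subst hy; subst hy'
    exact ⟨he.trans he'.symm, hst⟩
  · obtain ⟨u, v, huv, s, t, hst, hs, ht⟩ := h
    obtain ⟨he', hy'⟩ := starPhi_inr hs
    obtain ⟨he, hy⟩ := starPhi_inr ht
    subst hy; subst hy'
    exact ⟨he.trans he'.symm, hst.symm⟩

/-- In `D ⋆ P₁₂`, a vertex of `D` adjacent to an interior vertex `(e, y)` forces
`y = 1` (and `d` is the source of `e`) or `y = 11` (and `d` is the target of `e`). -/
lemma star_adj_inl_inr {D : Type*} {E : D → D → Prop} {d : D}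
    {e : {p : D × D // E p.1 p.2}} {y : {x : Fin 13 // x ≠ 0 ∧ x ≠ 12}}
    (h : (starGraph (pathGraph 13) (0 : Fin 13) 12 D E).Adj (Sum.inl d) (Sum.inr (e, y))) :
    (y.1.val = 1 ∧ d = e.1.1) ∨ (y.1.val = 11 ∧ d = e.1.2) := by
  simp only [_root_.starGraph, fromRel_adj] at h
  obtain ⟨-, h | h⟩ := h
  · obtain ⟨u, v, huv, s, t, hst, hs, ht⟩ := h
    obtain ⟨he, hy⟩ := starPhi_inr ht
    subst hy
    rw [pathGraph_adj] at hst
    obtain ⟨hsa, hd⟩ | ⟨hsb, hd⟩ := starPhi_inl hs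
    · subst hsa
      refine Or.inl ⟨?_, hd.trans (by rw [he])⟩
      have h0 : (0 : Fin 13).val = 0 := rfl
      omega
    · subst hsb
      refine Or.inr ⟨?_, hd.trans (by rw [he])⟩
      have h12 : (12 : Fin 13).val = 12 := rfl
      have hlt := y.1.isLt
      omega
  · obtain ⟨u, v, huv, s, t, hst, hs, ht⟩ := h
    obtain ⟨he, hy⟩ := starPhi_inr hs
    subst hy
    rw [pathGraph_adj] at hst
    obtain ⟨hsa, hd⟩ | ⟨hsb, hd⟩ := starPhi_inl ht
    · subst hsa
      refine Or.inl ⟨?_, hd.trans (by rw [he])⟩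
      have h0 : (0 : Fin 13).val = 0 := rfl
      omega
    · subst hsb
      refine Or.inr ⟨?_, hd.trans (by rw [he])⟩
      have h12 : (12 : Fin 13).val = 12 := rfl
      have hlt := y.1.isLt
      omega

/-- Let `P₄ = pathGraph 5` be the path with vertices `{0,1,2,3,4}`, `P₁₂ = pathGraph 13`
the path with 13 vertices `a,…,m = 0,…,12` (consecutive vertices adjacent), and
`ψ : P₁₂ → P₄` the graph homomorphism with values, in order along `P₁₂`:
`0,1,2,1,2,3,4,3,2,3,2,1,0`. Then for every digraph `(D, E)` without isolated points,
every graph homomorphism `χ : P₁₂ → D ⋆ (P₁₂, a, m)` with `ψ_D ∘ χ = ψ` equals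
`φ_{(u,v)}` for some edge `(u, v) ∈ E(D)`. -/
theorem stmt12 (D : Type*) (E : D → D → Prop)
    (hD : ∀ d : D, ∃ d', E d d' ∨ E d' d)
    (χ : pathGraph 13 →g starGraph (pathGraph 13) (0 : Fin 13) 12 D E)
    (hχ : ∀ x : Fin 13,
      starMap (![0, 1, 2, 1, 2, 3, 4, 3, 2, 3, 2, 1, 0] : Fin 13 → Fin 5) 0 12 (χ x) =
        ![0, 1, 2, 1, 2, 3, 4, 3, 2, 3, 2, 1, 0] x) :
    ∃ (u v : D) (huv : E u v), ∀ x : Fin 13, χ x = starPhi 0 12 u v huv x := by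
  -- Every vertex with nonzero color is mapped to an interior vertex.
  have key : ∀ x : Fin 13, (![0, 1, 2, 1, 2, 3, 4, 3, 2, 3, 2, 1, 0] : Fin 13 → Fin 5) x ≠ 0 →
      ∃ (e : {p : D × D // E p.1 p.2}) (y : {z : Fin 13 // z ≠ 0 ∧ z ≠ 12}),
        (![0, 1, 2, 1, 2, 3, 4, 3, 2, 3, 2, 1, 0] : Fin 13 → Fin 5) y.1 =
          (![0, 1, 2, 1, 2, 3, 4, 3, 2, 3, 2, 1, 0] : Fin 13 → Fin 5) x ∧
        χ x = Sum.inr (e, y) := by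
    intro x hx
    have h := hχ x
    rcases hcx : χ x with d | ⟨e, y⟩
    · rw [hcx] at h
      refine absurd ?_ hx
      rw [← h]
      simp only [starMap, Sum.elim_inl]
      decide
    · rw [hcx] at h
      simp only [starMap, Sum.elim_inr] at h
      exact ⟨e, y, h, rfl⟩
  -- The two endpoints (color 0) are mapped into `D`.
  have key0 : ∀ x : Fin 13, (![0, 1, 2, 1, 2, 3, 4, 3, 2, 3, 2, 1, 0] : Fin 13 → Fin 5) x = 0 →
      ∃ d, χ x = Sum.inl d := by
    intro x hx
    have h := hχ x
    rcases hcx : χ x with d | ⟨e, y⟩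
    · exact ⟨d, rfl⟩
    · rw [hcx] at h
      simp only [starMap, Sum.elim_inr] at h
      rw [hx] at h
      exfalso
      rcases (memv13 y.1).1 h with hv | hv
      · exact y.2.1 (Fin.ext (hv.trans rfl))
      · exact y.2.2 (Fin.ext (hv.trans rfl))
  obtain ⟨e1, y1, hp1, hc1⟩ := key 1 (by decide)
  obtain ⟨e2, y2, hp2, hc2⟩ := key 2 (by decide)
  obtain ⟨e3, y3, hp3, hc3⟩ := key 3 (by decide)
  obtain ⟨e4, y4, hp4, hc4⟩ := key 4 (by decide)
  obtain ⟨e5, y5, hp5, hc5⟩ := key 5 (by decide)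
  obtain ⟨e6, y6, hp6, hc6⟩ := key 6 (by decide)
  obtain ⟨e7, y7, hp7, hc7⟩ := key 7 (by decide)
  obtain ⟨e8, y8, hp8, hc8⟩ := key 8 (by decide)
  obtain ⟨e9, y9, hp9, hc9⟩ := key 9 (by decide)
  obtain ⟨e10, y10, hp10, hc10⟩ := key 10 (by decide)
  obtain ⟨e11, y11, hp11, hc11⟩ := key 11 (by decide)
  obtain ⟨d0, hc0⟩ := key0 0 (by decide)
  obtain ⟨d12, hc12⟩ := key0 12 (by decide)
  -- adjacency facts along the path
  have adj01 := χ.map_adj (show (pathGraph 13).Adj 0 1 from pathGraph_adj.mpr (Or.inl rfl))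
  rw [hc0, hc1] at adj01
  have hend0 := star_adj_inl_inr adj01
  have adj1112 := χ.map_adj (show (pathGraph 13).Adj 11 12 from pathGraph_adj.mpr (Or.inl rfl))
  rw [hc11, hc12] at adj1112
  have hend12 := star_adj_inl_inr adj1112.symm
  have adj1 := χ.map_adj (show (pathGraph 13).Adj 1 2 from pathGraph_adj.mpr (Or.inl rfl))
  rw [hc1, hc2] at adj1
  obtain ⟨he1, hy1⟩ := star_adj_inr_inr adj1
  rw [pathGraph_adj] at hy1
  have adj2 := χ.map_adj (show (pathGraph 13).Adj 2 3 from pathGraph_adj.mpr (Or.inl rfl))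
  rw [hc2, hc3] at adj2
  obtain ⟨he2, hy2⟩ := star_adj_inr_inr adj2
  rw [pathGraph_adj] at hy2
  have adj3 := χ.map_adj (show (pathGraph 13).Adj 3 4 from pathGraph_adj.mpr (Or.inl rfl))
  rw [hc3, hc4] at adj3
  obtain ⟨he3, hy3⟩ := star_adj_inr_inr adj3
  rw [pathGraph_adj] at hy3
  have adj4 := χ.map_adj (show (pathGraph 13).Adj 4 5 from pathGraph_adj.mpr (Or.inl rfl))
  rw [hc4, hc5] at adj4
  obtain ⟨he4, hy4⟩ := star_adj_inr_inr adj4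
  rw [pathGraph_adj] at hy4
  have adj5 := χ.map_adj (show (pathGraph 13).Adj 5 6 from pathGraph_adj.mpr (Or.inl rfl))
  rw [hc5, hc6] at adj5
  obtain ⟨he5, hy5⟩ := star_adj_inr_inr adj5
  rw [pathGraph_adj] at hy5
  have adj6 := χ.map_adj (show (pathGraph 13).Adj 6 7 from pathGraph_adj.mpr (Or.inl rfl))
  rw [hc6, hc7] at adj6
  obtain ⟨he6, hy6⟩ := star_adj_inr_inr adj6
  rw [pathGraph_adj] at hy6
  have adj7 := χ.map_adj (show (pathGraph 13).Adj 7 8 from pathGraph_adj.mpr (Or.inl rfl))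
  rw [hc7, hc8] at adj7
  obtain ⟨he7, hy7⟩ := star_adj_inr_inr adj7
  rw [pathGraph_adj] at hy7
  have adj8 := χ.map_adj (show (pathGraph 13).Adj 8 9 from pathGraph_adj.mpr (Or.inl rfl))
  rw [hc8, hc9] at adj8
  obtain ⟨he8, hy8⟩ := star_adj_inr_inr adj8
  rw [pathGraph_adj] at hy8
  have adj9 := χ.map_adj (show (pathGraph 13).Adj 9 10 from pathGraph_adj.mpr (Or.inl rfl))
  rw [hc9, hc10] at adj9
  obtain ⟨he9, hy9⟩ := star_adj_inr_inr adj9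
  rw [pathGraph_adj] at hy9
  have adj10 := χ.map_adj (show (pathGraph 13).Adj 10 11 from pathGraph_adj.mpr (Or.inl rfl))
  rw [hc10, hc11] at adj10
  obtain ⟨he10, hy10⟩ := star_adj_inr_inr adj10
  rw [pathGraph_adj] at hy10
  -- color membership facts
  have m1 := (memv13 y1.1).2.1 (hp1.trans (by decide))
  have m2 := (memv13 y2.1).2.2.1 (hp2.trans (by decide))
  have m3 := (memv13 y3.1).2.1 (hp3.trans (by decide))
  have m4 := (memv13 y4.1).2.2.1 (hp4.trans (by decide))
  have m5 := (memv13 y5.1).2.2.2.1 (hp5.trans (by decide))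
  have m6 := (memv13 y6.1).2.2.2.2 (hp6.trans (by decide))
  have m7 := (memv13 y7.1).2.2.2.1 (hp7.trans (by decide))
  have m8 := (memv13 y8.1).2.2.1 (hp8.trans (by decide))
  have m9 := (memv13 y9.1).2.2.2.1 (hp9.trans (by decide))
  have m10 := (memv13 y10.1).2.2.1 (hp10.trans (by decide))
  have m11 := (memv13 y11.1).2.1 (hp11.trans (by decide))
  -- endpoint constraints
  have e0v : y1.1.val = 1 ∨ y1.1.val = 11 := hend0.imp And.left And.left
  have e12v : y11.1.val = 1 ∨ y11.1.val = 11 := hend12.imp And.left And.left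
  obtain ⟨n1, n2, n3, n4, n5, n6, n7, n8, n9, n10, n11⟩ :=
    chain12 y1.1.val y2.1.val y3.1.val y4.1.val y5.1.val y6.1.val y7.1.val y8.1.val
      y9.1.val y10.1.val y11.1.val m1 m2 m3 m4 m5 m6 m7 m8 m9 m10 m11
      hy1 hy2 hy3 hy4 hy5 hy6 hy7 hy8 hy9 hy10 e0v e12v
  -- all interior vertices lie over the same edge `e1`
  have q2 : e2 = e1 := Subtype.ext he1.symm
  have q3 : e3 = e1 := Subtype.ext (he1.trans he2).symm
  have q4 : e4 = e1 := Subtype.ext ((he1.trans he2).trans he3).symm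
  have q5 : e5 = e1 := Subtype.ext (((he1.trans he2).trans he3).trans he4).symm
  have q6 : e6 = e1 := Subtype.ext ((((he1.trans he2).trans he3).trans he4).trans he5).symm
  have q7 : e7 = e1 :=
    Subtype.ext (((((he1.trans he2).trans he3).trans he4).trans he5).trans he6).symm
  have q8 : e8 = e1 :=
    Subtype.ext ((((((he1.trans he2).trans he3).trans he4).trans he5).trans he6).trans he7).symm
  have q9 : e9 = e1 :=
    Subtype.ext (((((((he1.trans he2).trans he3).trans he4).trans he5).trans he6).trans
      he7).trans he8).symm
  have q10 : e10 = e1 :=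
    Subtype.ext ((((((((he1.trans he2).trans he3).trans he4).trans he5).trans he6).trans
      he7).trans he8).trans he9).symm
  have q11 : e11 = e1 :=
    Subtype.ext (((((((((he1.trans he2).trans he3).trans he4).trans he5).trans he6).trans
      he7).trans he8).trans he9).trans he10).symm
  rw [q2] at hc2; rw [q3] at hc3; rw [q4] at hc4; rw [q5] at hc5; rw [q6] at hc6
  rw [q7] at hc7; rw [q8] at hc8; rw [q9] at hc9; rw [q10] at hc10; rw [q11] at hc11
  -- the endpoint identifications
  have hd0 : d0 = e1.1.1 := by
    rcases hend0 with ⟨-, hd⟩ | ⟨hv, -⟩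
    · exact hd
    · omega
  have hd12 : d12 = e1.1.2 := by
    rcases hend12 with ⟨hv, -⟩ | ⟨-, hd⟩
    · omega
    · rw [hd, q11]
  -- the values of starPhi
  have phi0 : starPhi (0 : Fin 13) 12 e1.1.1 e1.1.2 e1.2 0 = Sum.inl e1.1.1 := by
    unfold starPhi starVert; rw [dif_pos rfl]
  have phi12 : starPhi (0 : Fin 13) 12 e1.1.1 e1.1.2 e1.2 12 = Sum.inl e1.1.2 := by
    unfold starPhi starVert; rw [dif_neg (by decide), dif_pos rfl]
  have phiI : ∀ (k : Fin 13) (h0 : k ≠ 0) (h12 : k ≠ 12),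
      starPhi (0 : Fin 13) 12 e1.1.1 e1.1.2 e1.2 k =
        Sum.inr (⟨(e1.1.1, e1.1.2), e1.2⟩, ⟨k, h0, h12⟩) := by
    intro k h0 h12; unfold starPhi starVert; rw [dif_neg h0, dif_neg h12]
  -- identify the interior coordinates
  have w1 : y1 = ⟨1, by decide⟩ := Subtype.ext (Fin.ext (n1.trans rfl))
  have w2 : y2 = ⟨2, by decide⟩ := Subtype.ext (Fin.ext (n2.trans rfl))
  have w3 : y3 = ⟨3, by decide⟩ := Subtype.ext (Fin.ext (n3.trans rfl))
  have w4 : y4 = ⟨4, by decide⟩ := Subtype.ext (Fin.ext (n4.trans rfl))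
  have w5 : y5 = ⟨5, by decide⟩ := Subtype.ext (Fin.ext (n5.trans rfl))
  have w6 : y6 = ⟨6, by decide⟩ := Subtype.ext (Fin.ext (n6.trans rfl))
  have w7 : y7 = ⟨7, by decide⟩ := Subtype.ext (Fin.ext (n7.trans rfl))
  have w8 : y8 = ⟨8, by decide⟩ := Subtype.ext (Fin.ext (n8.trans rfl))
  have w9 : y9 = ⟨9, by decide⟩ := Subtype.ext (Fin.ext (n9.trans rfl))
  have w10 : y10 = ⟨10, by decide⟩ := Subtype.ext (Fin.ext (n10.trans rfl))
  have w11 : y11 = ⟨11, by decide⟩ := Subtype.ext (Fin.ext (n11.trans rfl))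
  refine ⟨e1.1.1, e1.1.2, e1.2, ?_⟩
  have g0 : χ 0 = starPhi (0 : Fin 13) 12 e1.1.1 e1.1.2 e1.2 0 := by
    rw [hc0, hd0, phi0]
  have g12 : χ 12 = starPhi (0 : Fin 13) 12 e1.1.1 e1.1.2 e1.2 12 := by
    rw [hc12, hd12, phi12]
  have g1 : χ 1 = starPhi (0 : Fin 13) 12 e1.1.1 e1.1.2 e1.2 1 := by
    rw [hc1, w1, phiI 1 (by decide) (by decide)]
  have g2 : χ 2 = starPhi (0 : Fin 13) 12 e1.1.1 e1.1.2 e1.2 2 := by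
    rw [hc2, w2, phiI 2 (by decide) (by decide)]
  have g3 : χ 3 = starPhi (0 : Fin 13) 12 e1.1.1 e1.1.2 e1.2 3 := by
    rw [hc3, w3, phiI 3 (by decide) (by decide)]
  have g4 : χ 4 = starPhi (0 : Fin 13) 12 e1.1.1 e1.1.2 e1.2 4 := by
    rw [hc4, w4, phiI 4 (by decide) (by decide)]
  have g5 : χ 5 = starPhi (0 : Fin 13) 12 e1.1.1 e1.1.2 e1.2 5 := by
    rw [hc5, w5, phiI 5 (by decide) (by decide)]
  have g6 : χ 6 = starPhi (0 : Fin 13) 12 e1.1.1 e1.1.2 e1.2 6 := by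
    rw [hc6, w6, phiI 6 (by decide) (by decide)]
  have g7 : χ 7 = starPhi (0 : Fin 13) 12 e1.1.1 e1.1.2 e1.2 7 := by
    rw [hc7, w7, phiI 7 (by decide) (by decide)]
  have g8 : χ 8 = starPhi (0 : Fin 13) 12 e1.1.1 e1.1.2 e1.2 8 := by
    rw [hc8, w8, phiI 8 (by decide) (by decide)]
  have g9 : χ 9 = starPhi (0 : Fin 13) 12 e1.1.1 e1.1.2 e1.2 9 := by
    rw [hc9, w9, phiI 9 (by decide) (by decide)]
  have g10 : χ 10 = starPhi (0 : Fin 13) 12 e1.1.1 e1.1.2 e1.2 10 := by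
    rw [hc10, w10, phiI 10 (by decide) (by decide)]
  have g11 : χ 11 = starPhi (0 : Fin 13) 12 e1.1.1 e1.1.2 e1.2 11 := by
    rw [hc11, w11, phiI 11 (by decide) (by decide)]
  intro x
  fin_cases x
  exacts [g0, g1, g2, g3, g4, g5, g6, g7, g8, g9, g10, g11, g12]
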